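/- arXiv:2210.12021 — 5 statements merged into one kernel-verified Lean document; each statement's English description precedes it below -/
import Mathlib

section
/- In a 2-category, if f ⊣ g is an adjunction between 1-cells, then the unit of the adjunction is invertible if and only if f is fully faithful (i.e., for every object x, the functor Hom(x, f) : Hom(x, e) → Hom(x, b) induced by postcomposition with f is fully faithful). -/
open CategoryTheory CategoryTheory.Bicategory

universe w v u

/-- The adjunction on hom-categories induced by a bicategorical adjunction. -/
noncomputable def homAdj {B : Type u} [Bicategory.{w, v} B] {e b : B}
    (f : e ⟶ b) (g : b ⟶ e) (adj : Bicategory.Adjunction f g) (x : B) :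
    (Bicategory.postcomposing x e b).obj f ⊣ (Bicategory.postcomposing x b e).obj g :=
  CategoryTheory.Adjunction.mkOfUnitCounit
    { unit :=
        { app := fun u => (ρ_ u).inv ≫ u ◁ adj.unit ≫ (α_ u f g).inv
          naturality := by
            intros u v φ
            dsimp [postcomposing, postcomp]
            rw [rightUnitor_inv_naturality_assoc, ← whisker_exchange_assoc,
              associator_inv_naturality_left]
            simp }
      counit :=
        { app := fun v => (α_ v g f).hom ≫ v ◁ adj.counit ≫ (ρ_ v).hom
          naturality := by
            intros u v φ
            dsimp [postcomposing, postcomp]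
            rw [associator_naturality_left_assoc, ← whisker_exchange_assoc,
              rightUnitor_naturality]
            simp }
      left_triangle := by
        ext u
        have h := adj.left_triangle
        dsimp [Bicategory.leftZigzag] at h
        dsimp [postcomposing, postcomp]
        calc _ = 𝟙 _ ⊗≫ u ◁ (adj.unit ▷ f ⊗≫ f ◁ adj.counit) ⊗≫ 𝟙 _ := by
              bicategory
          _ = 𝟙 (u ≫ f) := by rw [h]; bicategory
      right_triangle := by
        ext v
        have h := adj.right_triangle
        dsimp [Bicategory.rightZigzag] at h
        dsimp [postcomposing, postcomp]
        calc _ = 𝟙 _ ⊗≫ v ◁ (g ◁ adj.unit ⊗≫ adj.counit ▷ g) ⊗≫ 𝟙 _ := by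
              bicategory
          _ = 𝟙 (v ≫ g) := by rw [h]; bicategory }

theorem stmt2 {B : Type u} [Bicategory.{w, v} B] {e b : B}
    (f : e ⟶ b) (g : b ⟶ e) (adj : Bicategory.Adjunction f g) :
    IsIso adj.unit ↔
      ∀ x : B, ((Bicategory.postcomposing x e b).obj f).Full ∧
        ((Bicategory.postcomposing x e b).obj f).Faithful := by
  constructor
  · intro hiso x
    haveI : ∀ u : x ⟶ e, IsIso ((homAdj f g adj x).unit.app u) := fun u => by
      dsimp [homAdj, Adjunction.mkOfUnitCounit]
      exact @IsIso.comp_isIso _ _ _ _ _ _ _ (Iso.isIso_inv _)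
        (@IsIso.comp_isIso _ _ _ _ _ _ _ inferInstance (Iso.isIso_inv _))
    haveI : IsIso (homAdj f g adj x).unit := NatIso.isIso_of_isIso_app _
    have hf := Adjunction.fullyFaithfulLOfIsIsoUnit (homAdj f g adj x)
    exact ⟨hf.full, hf.faithful⟩
  · intro h
    obtain ⟨hfull, hfaith⟩ := h e
    haveI := hfull; haveI := hfaith
    haveI : IsIso ((homAdj f g adj e).unit.app (𝟙 e)) := inferInstance
    have heq : 𝟙 e ◁ adj.unit =
        (ρ_ (𝟙 e)).hom ≫ (homAdj f g adj e).unit.app (𝟙 e) ≫ (α_ (𝟙 e) f g).hom := by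
      simp [homAdj, postcomposing, postcomp]
    have h1 : IsIso (𝟙 e ◁ adj.unit) := by
      rw [heq]
      exact @IsIso.comp_isIso _ _ _ _ _ _ _ inferInstance
        (@IsIso.comp_isIso _ _ _ _ _ _ _ this (Iso.isIso_hom _))
    have heq2 : adj.unit = (λ_ (𝟙 e)).inv ≫ 𝟙 e ◁ adj.unit ≫ (λ_ (f ≫ g)).hom := by
      rw [leftUnitor_naturality]; simp
    rw [heq2]
    infer_instance
end

section
/- In a 2-category, a 1-cell p that has a right adjoint is an equivalence if and only if p is both fully faithful and a lax epimorphism. -/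
open CategoryTheory CategoryTheory.Bicategory

universe w v u

section Aux

variable {B : Type u} [Bicategory.{w, v} B] {e b : B}

/-- The adjunction between hom-categories induced by postcomposition. -/
def postHomAdj (p : e ⟶ b) (g : b ⟶ e) (adj : Bicategory.Adjunction p g) (x : B) :
    CategoryTheory.Adjunction (Bicategory.postcomp x p) (Bicategory.postcomp x g) where
  unit := (Bicategory.rightUnitorNatIso x e).inv ≫
    (Bicategory.postcomposing x e e).map adj.unit ≫ (Bicategory.associatorNatIsoLeft x p g).inv
  counit := (Bicategory.associatorNatIsoLeft x g p).hom ≫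
    (Bicategory.postcomposing x b b).map adj.counit ≫ (Bicategory.rightUnitorNatIso x b).hom
  left_triangle_components := by
    intro f
    change ((ρ_ f).inv ≫ f ◁ adj.unit ≫ (α_ f p g).inv) ▷ p ≫ (α_ (f ≫ p) g p).hom ≫ (f ≫ p) ◁ adj.counit ≫ (ρ_ (f ≫ p)).hom = 𝟙 (f ≫ p)
    calc
      _ = 𝟙 _ ⊗≫ f ◁ leftZigzag adj.unit adj.counit ⊗≫ 𝟙 _ := by bicategory
      _ = 𝟙 _ ⊗≫ f ◁ ((λ_ p).hom ≫ (ρ_ p).inv) ⊗≫ 𝟙 _ := by rw [adj.left_triangle]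
      _ = 𝟙 (f ≫ p) := by bicategory
  right_triangle_components := by
    intro h
    change ((ρ_ (h ≫ g)).inv ≫ (h ≫ g) ◁ adj.unit ≫ (α_ (h ≫ g) p g).inv) ≫ ((α_ h g p).hom ≫ h ◁ adj.counit ≫ (ρ_ h).hom) ▷ g = 𝟙 (h ≫ g)
    calc
      _ = 𝟙 _ ⊗≫ h ◁ rightZigzag adj.unit adj.counit ⊗≫ 𝟙 _ := by bicategory
      _ = 𝟙 _ ⊗≫ h ◁ ((ρ_ g).hom ≫ (λ_ g).inv) ⊗≫ 𝟙 _ := by rw [adj.right_triangle]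
      _ = 𝟙 (h ≫ g) := by bicategory

/-- The adjunction between hom-categories induced by precomposition. -/
def preHomAdj (p : e ⟶ b) (g : b ⟶ e) (adj : Bicategory.Adjunction p g) (c : B) :
    CategoryTheory.Adjunction (Bicategory.precomp c g) (Bicategory.precomp c p) where
  unit := (Bicategory.leftUnitorNatIso e c).inv ≫
    (Bicategory.precomposing e e c).map adj.unit ≫ (Bicategory.associatorNatIsoRight p g c).hom
  counit := (Bicategory.associatorNatIsoRight g p c).inv ≫
    (Bicategory.precomposing b b c).map adj.counit ≫ (Bicategory.leftUnitorNatIso b c).hom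
  left_triangle_components := by
    intro W
    change g ◁ ((λ_ W).inv ≫ adj.unit ▷ W ≫ (α_ p g W).hom) ≫ (α_ g p (g ≫ W)).inv ≫ adj.counit ▷ (g ≫ W) ≫ (λ_ (g ≫ W)).hom = 𝟙 (g ≫ W)
    calc
      _ = 𝟙 _ ⊗≫ rightZigzag adj.unit adj.counit ▷ W ⊗≫ 𝟙 _ := by bicategory
      _ = 𝟙 _ ⊗≫ ((ρ_ g).hom ≫ (λ_ g).inv) ▷ W ⊗≫ 𝟙 _ := by rw [adj.right_triangle]
      _ = 𝟙 (g ≫ W) := by bicategory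
  right_triangle_components := by
    intro X
    change ((λ_ (p ≫ X)).inv ≫ adj.unit ▷ (p ≫ X) ≫ (α_ p g (p ≫ X)).hom) ≫ p ◁ ((α_ g p X).inv ≫ adj.counit ▷ X ≫ (λ_ X).hom) = 𝟙 (p ≫ X)
    calc
      _ = 𝟙 _ ⊗≫ leftZigzag adj.unit adj.counit ▷ X ⊗≫ 𝟙 _ := by bicategory
      _ = 𝟙 _ ⊗≫ ((λ_ p).hom ≫ (ρ_ p).inv) ▷ X ⊗≫ 𝟙 _ := by rw [adj.left_triangle]
      _ = 𝟙 (p ≫ X) := by bicategory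

/-- Postcomposition with an "equivalence" 1-cell is an equivalence of hom-categories. -/
def postEquiv (p : e ⟶ b) (q : b ⟶ e) (u : 𝟙 e ≅ p ≫ q) (ciso : q ≫ p ≅ 𝟙 b) (x : B) :
    (x ⟶ e) ≌ (x ⟶ b) :=
  CategoryTheory.Equivalence.mk (Bicategory.postcomp x p) (Bicategory.postcomp x q)
    ((Bicategory.rightUnitorNatIso x e).symm ≪≫ (Bicategory.postcomposing x e e).mapIso u ≪≫
      (Bicategory.associatorNatIsoLeft x p q).symm)
    (Bicategory.associatorNatIsoLeft x q p ≪≫ (Bicategory.postcomposing x b b).mapIso ciso ≪≫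
      Bicategory.rightUnitorNatIso x b)

/-- Precomposition with an "equivalence" 1-cell is an equivalence of hom-categories. -/
def preEquiv (p : e ⟶ b) (q : b ⟶ e) (u : 𝟙 e ≅ p ≫ q) (ciso : q ≫ p ≅ 𝟙 b) (c : B) :
    (b ⟶ c) ≌ (e ⟶ c) :=
  CategoryTheory.Equivalence.mk (Bicategory.precomp c p) (Bicategory.precomp c q)
    ((Bicategory.leftUnitorNatIso b c).symm ≪≫ (Bicategory.precomposing b b c).mapIso ciso.symm ≪≫
      Bicategory.associatorNatIsoRight q p c)
    ((Bicategory.associatorNatIsoRight p q c).symm ≪≫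
      (Bicategory.precomposing e e c).mapIso u.symm ≪≫ Bicategory.leftUnitorNatIso e c)

end Aux

theorem stmt4 {B : Type u} [Bicategory.{w, v} B] {e b : B}
    (p : e ⟶ b) (g : b ⟶ e) (adj : Bicategory.Adjunction p g) :
    (∃ q : b ⟶ e, Nonempty (𝟙 e ≅ p ≫ q) ∧ Nonempty (q ≫ p ≅ 𝟙 b)) ↔
      ((∀ x : B, ((Bicategory.postcomposing x e b).obj p).Full ∧
          ((Bicategory.postcomposing x e b).obj p).Faithful) ∧
        (∀ c : B, ((Bicategory.precomposing e b c).obj p).Full ∧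
          ((Bicategory.precomposing e b c).obj p).Faithful)) := by
  constructor
  · rintro ⟨q, ⟨u⟩, ⟨ciso⟩⟩
    constructor
    · intro x
      let E := postEquiv p q u ciso x
      exact ⟨E.full_functor, E.faithful_functor⟩
    · intro c
      let E := preEquiv p q u ciso c
      exact ⟨E.full_functor, E.faithful_functor⟩
  · rintro ⟨hpost, hpre⟩
    refine ⟨g, ?_, ?_⟩
    · -- unit is invertible
      haveI : (Bicategory.postcomp e p).Full := (hpost e).1
      haveI : (Bicategory.postcomp e p).Faithful := (hpost e).2
      haveI h1 : IsIso ((postHomAdj p g adj e).unit.app (𝟙 e)) := inferInstance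
      have h2 : 𝟙 e ◁ adj.unit =
          (ρ_ (𝟙 e)).hom ≫ (postHomAdj p g adj e).unit.app (𝟙 e) ≫ (α_ (𝟙 e) p g).hom := by
        change _ = (ρ_ (𝟙 e)).hom ≫ ((ρ_ (𝟙 e)).inv ≫ 𝟙 e ◁ adj.unit ≫ (α_ (𝟙 e) p g).inv) ≫ (α_ (𝟙 e) p g).hom
        simp
      haveI h3 : IsIso (𝟙 e ◁ adj.unit) := by rw [h2]; exact IsIso.comp_isIso' inferInstance (IsIso.comp_isIso' h1 (Iso.isIso_hom (α_ (𝟙 e) p g)))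
      have h4 : adj.unit = (λ_ (𝟙 e)).inv ≫ 𝟙 e ◁ adj.unit ≫ (λ_ (p ≫ g)).hom := by
        simp
      haveI : IsIso adj.unit := by rw [h4]; infer_instance
      exact ⟨asIso adj.unit⟩
    · -- counit is invertible
      haveI : (Bicategory.precomp b p).Full := (hpre b).1
      haveI : (Bicategory.precomp b p).Faithful := (hpre b).2
      haveI h1 : IsIso ((preHomAdj p g adj b).counit.app (𝟙 b)) := inferInstance
      have h2 : adj.counit ▷ 𝟙 b =
          (α_ g p (𝟙 b)).hom ≫ (preHomAdj p g adj b).counit.app (𝟙 b) ≫ (λ_ (𝟙 b)).inv := by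
        change _ = (α_ g p (𝟙 b)).hom ≫ ((α_ g p (𝟙 b)).inv ≫ adj.counit ▷ 𝟙 b ≫ (λ_ (𝟙 b)).hom) ≫ (λ_ (𝟙 b)).inv
        simp
      haveI h3 : IsIso (adj.counit ▷ 𝟙 b) := by rw [h2]; exact IsIso.comp_isIso' inferInstance (IsIso.comp_isIso' h1 inferInstance)
      have h4 : adj.counit = (ρ_ (g ≫ p)).inv ≫ adj.counit ▷ 𝟙 b ≫ (ρ_ (𝟙 b)).hom := by
        simp
      haveI : IsIso adj.counit := by rw [h4]; infer_instance
      exact ⟨asIso adj.counit⟩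
end

section
/- A functor p : e → b between small categories is fully faithful if and only if the left Kan extension functor Lan_p : [eᵒᵖ, Set] → [bᵒᵖ, Set] along p (equivalently, left Kan extension of presheaves) is fully faithful. -/
open CategoryTheory Limits Opposite

universe u

theorem stmt5 {e b : Type u} [SmallCategory e] [SmallCategory b] (p : e ⥤ b) :
    (p.Full ∧ p.Faithful) ↔
      ((p.op.lan : (eᵒᵖ ⥤ Type u) ⥤ (bᵒᵖ ⥤ Type u)).Full ∧
        (p.op.lan : (eᵒᵖ ⥤ Type u) ⥤ (bᵒᵖ ⥤ Type u)).Faithful) := by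
  constructor
  · rintro ⟨hF, hf⟩
    have : IsIso ((p.op.lanAdjunction (Type u)).unit) := inferInstance
    have ff := (p.op.lanAdjunction (Type u)).fullyFaithfulLOfIsIsoUnit
    exact ⟨ff.full, ff.faithful⟩
  · rintro ⟨hF, hf⟩
    have e := Presheaf.compULiftYonedaIsoULiftYonedaCompLan.{u} p
    have h1 : (p ⋙ uliftYoneda.{u}).Full := Functor.Full.of_iso e.symm
    have h2 : (p ⋙ uliftYoneda.{u}).Faithful := Functor.Faithful.of_iso e.symm
    exact ⟨Functor.Full.of_comp_faithful p uliftYoneda.{u}, Functor.Faithful.of_comp p uliftYoneda.{u}⟩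
end

section
/- Let p : e → b be a functor between small categories. If the precomposition functor p* : [b, Set] → [e, Set] is fully faithful, then p is a lax epimorphism: for every category c, the precomposition functor Fun(b, c) → Fun(e, c) is fully faithful. -/
open CategoryTheory Limits

universe w v u

namespace Stmt7Aux

variable {e b : Type u} [SmallCategory e] [SmallCategory b] (p : e ⥤ b)

/-- Triples `(u, g, m)` factoring a morphism `x ⟶ y` through `p`. -/
def Tri (x y : b) := Σ (u : e), (x ⟶ p.obj u) × (p.obj u ⟶ y)

/-- Elementary relation on factorization triples. -/
def Rel (x y : b) : Tri p x y → Tri p x y → Prop :=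
  fun t t' => ∃ v : t.1 ⟶ t'.1, t'.2.1 = t.2.1 ≫ p.map v ∧ t.2.2 = p.map v ≫ t'.2.2

section

/-- Two factorizations of the same morphism become equal in the quotient. -/
theorem key (hf : ((Functor.whiskeringLeft e b (Type u)).obj p).Full)
    (hfa : ((Functor.whiskeringLeft e b (Type u)).obj p).Faithful) {x y : b} {u₁ u₂ : e} (g₁ : x ⟶ p.obj u₁) (m₁ : p.obj u₁ ⟶ y)
    (g₂ : x ⟶ p.obj u₂) (m₂ : p.obj u₂ ⟶ y) (hgm : g₁ ≫ m₁ = g₂ ≫ m₂) :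
    Quot.mk (Rel p x y) ⟨u₁, g₁, m₁⟩ = Quot.mk (Rel p x y) ⟨u₂, g₂, m₂⟩ := by
  haveI := hf
  haveI := hfa
  set F : b ⥤ Type u := coyoneda.obj (Opposite.op x) with hF
  have adj := p.lanAdjunction (Type u)
  haveI : IsIso (p.lanAdjunction (Type u)).counit :=
    Adjunction.counit_isIso_of_R_fully_faithful _
  have hpt : (Functor.LeftExtension.mk _ (p.lanUnit.app (p ⋙ F))).IsPointwiseLeftKanExtension :=
    Functor.isPointwiseLeftKanExtensionOfIsLeftKanExtension _ (p.lanUnit.app (p ⋙ F))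
  have hy := hpt y
  -- the counit at F, evaluated at y, is injective
  set ε : p.lan.obj (p ⋙ F) ⟶ F := (p.lanAdjunction (Type u)).counit.app F with hε
  haveI : IsIso ε := by rw [hε]; infer_instance
  haveI : IsIso (ε.app y) := by infer_instance
  have hinj : Function.Injective (ε.app y) :=
    ((isIso_iff_bijective (ε.app y)).mp inferInstance).1
  -- legs composed with ε compute composition
  have hleg : ∀ (u : e) (m : p.obj u ⟶ y) (g : x ⟶ p.obj u),
      ε.app y (((Functor.LeftExtension.mk _ (p.lanUnit.app (p ⋙ F))).coconeAt y).ι.app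
        (CostructuredArrow.mk m) g) = g ≫ m := by
    intro u m g
    have h1 : ((p.lanUnit.app (p ⋙ F)).app u ≫ ε.app (p.obj u)) g = g :=
      ConcreteCategory.congr_hom (p.lanUnit_app_app_lanAdjunction_counit_app_app F u) g
    have h2 := ConcreteCategory.congr_hom (ε.naturality m) ((p.lanUnit.app (p ⋙ F)).app u g)
    simp only [types_comp_apply] at h1 h2
    show ε.app y ((p.lan.obj (p ⋙ F)).map m ((p.lanUnit.app (p ⋙ F)).app u g)) = g ≫ m
    rw [h2, h1]
    rfl
  -- cocone with point the quotient
  let qc : Cocone (CostructuredArrow.proj p y ⋙ (p ⋙ F)) :=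
    { pt := Quot (Rel p x y)
      ι :=
        { app := fun cs => TypeCat.ofHom (fun g => Quot.mk (Rel p x y) ⟨cs.left, g, cs.hom⟩)
          naturality := fun cs₁ cs₂ φ => by
            ext g
            exact (Quot.sound ⟨φ.left, rfl, by rw [← CostructuredArrow.w φ]⟩).symm } }
  have hdesc := hy.desc qc
  have a₁ := ((Functor.LeftExtension.mk _ (p.lanUnit.app (p ⋙ F))).coconeAt y).ι.app
    (CostructuredArrow.mk m₁) g₁
  have heq : ((Functor.LeftExtension.mk _ (p.lanUnit.app (p ⋙ F))).coconeAt y).ι.app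
      (CostructuredArrow.mk m₁) g₁ =
      ((Functor.LeftExtension.mk _ (p.lanUnit.app (p ⋙ F))).coconeAt y).ι.app
      (CostructuredArrow.mk m₂) g₂ := by
    apply hinj
    rw [hleg, hleg, hgm]
  have h1 : (hy.desc qc) (((Functor.LeftExtension.mk _ (p.lanUnit.app (p ⋙ F))).coconeAt y).ι.app
      (CostructuredArrow.mk m₁) g₁) = Quot.mk (Rel p x y) ⟨u₁, g₁, m₁⟩ :=
    ConcreteCategory.congr_hom (hy.fac qc (CostructuredArrow.mk m₁)) g₁
  have h2 : (hy.desc qc) (((Functor.LeftExtension.mk _ (p.lanUnit.app (p ⋙ F))).coconeAt y).ι.app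
      (CostructuredArrow.mk m₂) g₂) = Quot.mk (Rel p x y) ⟨u₂, g₂, m₂⟩ :=
    ConcreteCategory.congr_hom (hy.fac qc (CostructuredArrow.mk m₂)) g₂
  rw [← h1, ← h2, heq]

/-- Each object of `b` admits a splitting through `p`. -/
theorem split (hf : ((Functor.whiskeringLeft e b (Type u)).obj p).Full)
    (hfa : ((Functor.whiskeringLeft e b (Type u)).obj p).Faithful) (x : b) : ∃ (u : e) (g : x ⟶ p.obj u) (m : p.obj u ⟶ x), g ≫ m = 𝟙 x := by
  haveI := hf
  haveI := hfa
  set F : b ⥤ Type u := coyoneda.obj (Opposite.op x) with hF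
  haveI : IsIso (p.lanAdjunction (Type u)).counit :=
    Adjunction.counit_isIso_of_R_fully_faithful _
  have hpt : (Functor.LeftExtension.mk _ (p.lanUnit.app (p ⋙ F))).IsPointwiseLeftKanExtension :=
    Functor.isPointwiseLeftKanExtensionOfIsLeftKanExtension _ (p.lanUnit.app (p ⋙ F))
  have hx := hpt x
  set ε : p.lan.obj (p ⋙ F) ⟶ F := (p.lanAdjunction (Type u)).counit.app F with hε
  haveI : IsIso ε := by rw [hε]; infer_instance
  haveI : IsIso (ε.app x) := by infer_instance
  have hsurj : Function.Surjective (ε.app x) :=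
    ((isIso_iff_bijective (ε.app x)).mp inferInstance).2
  obtain ⟨a, ha⟩ := hsurj (𝟙 x)
  obtain ⟨cs, g, hg⟩ := Types.jointly_surjective _ hx a
  refine ⟨cs.left, g, cs.hom, ?_⟩
  have h1 : ((p.lanUnit.app (p ⋙ F)).app cs.left ≫ ε.app (p.obj cs.left)) g = g :=
    ConcreteCategory.congr_hom (p.lanUnit_app_app_lanAdjunction_counit_app_app F cs.left) g
  have h2 : ε.app x ((p.lan.obj (p ⋙ F)).map cs.hom ((p.lanUnit.app (p ⋙ F)).app cs.left g)) =
      F.map cs.hom (ε.app (p.obj cs.left) ((p.lanUnit.app (p ⋙ F)).app cs.left g)) :=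
    ConcreteCategory.congr_hom (ε.naturality cs.hom) ((p.lanUnit.app (p ⋙ F)).app cs.left g)
  simp only [types_comp_apply, ConcreteCategory.comp_apply] at h1
  have key2 : ε.app x ((p.lan.obj (p ⋙ F)).map cs.hom
      ((p.lanUnit.app (p ⋙ F)).app cs.left g)) = g ≫ cs.hom := by
    rw [h2]
    exact congrArg (F.map cs.hom) h1
  have hg' : (p.lan.obj (p ⋙ F)).map cs.hom ((p.lanUnit.app (p ⋙ F)).app cs.left g) = a := hg
  rw [hg', ha] at key2
  exact key2.symm

/-- Invariance in an arbitrary category `c`. -/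
theorem key' (hf : ((Functor.whiskeringLeft e b (Type u)).obj p).Full)
    (hfa : ((Functor.whiskeringLeft e b (Type u)).obj p).Faithful) {c : Type v} [Category.{w} c] {F G : b ⥤ c} (γ : p ⋙ F ⟶ p ⋙ G)
    {x y : b} {u₁ u₂ : e} (g₁ : x ⟶ p.obj u₁) (m₁ : p.obj u₁ ⟶ y)
    (g₂ : x ⟶ p.obj u₂) (m₂ : p.obj u₂ ⟶ y) (hgm : g₁ ≫ m₁ = g₂ ≫ m₂) :
    F.map g₁ ≫ γ.app u₁ ≫ G.map m₁ = F.map g₂ ≫ γ.app u₂ ≫ G.map m₂ := by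
  let Φ : Tri p x y → (F.obj x ⟶ G.obj y) :=
    fun t => F.map t.2.1 ≫ γ.app t.1 ≫ G.map t.2.2
  have hΦ : ∀ t t', Rel p x y t t' → Φ t = Φ t' := by
    rintro ⟨u, g, mm⟩ ⟨u', g', mm'⟩ ⟨v, h1, h2⟩
    show F.map g ≫ γ.app u ≫ G.map mm = F.map g' ≫ γ.app u' ≫ G.map mm'
    dsimp only at h1 h2
    rw [h1, h2]
    have hn := γ.naturality v
    dsimp only [Functor.comp_map] at hn
    rw [Functor.map_comp, Functor.map_comp]
    slice_lhs 2 3 => rw [← hn]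
    simp
  exact congrArg (Quot.lift Φ hΦ) (key p hf hfa g₁ m₁ g₂ m₂ hgm)

end

end Stmt7Aux

theorem stmt7 {e b : Type u} [SmallCategory e] [SmallCategory b] (p : e ⥤ b)
    (h : ((Functor.whiskeringLeft e b (Type u)).obj p).Full ∧
      ((Functor.whiskeringLeft e b (Type u)).obj p).Faithful) :
    ∀ (c : Type v) (_ : Category.{w} c),
      ((Functor.whiskeringLeft e b c).obj p).Full ∧ ((Functor.whiskeringLeft e b c).obj p).Faithful := by
  obtain ⟨hf, hfa⟩ := h
  intro c _
  choose u g m hgm using fun x => Stmt7Aux.split p hf hfa x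
  constructor
  · refine ⟨fun {F G} γ => ?_⟩
    refine ⟨{ app := fun x => F.map (g x) ≫ γ.app (u x) ≫ G.map (m x)
              naturality := fun x y k => ?_ }, ?_⟩
    · have h1 : F.map k ≫ F.map (g y) ≫ γ.app (u y) ≫ G.map (m y) =
          F.map (k ≫ g y) ≫ γ.app (u y) ≫ G.map (m y) := by simp
      have h2 : (F.map (g x) ≫ γ.app (u x) ≫ G.map (m x)) ≫ G.map k =
          F.map (g x) ≫ γ.app (u x) ≫ G.map (m x ≫ k) := by simp
      rw [h1, h2]
      exact Stmt7Aux.key' p hf hfa γ _ _ _ _ (by rw [Category.assoc, hgm y, Category.comp_id,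
        ← Category.assoc, hgm x, Category.id_comp])
    · ext v
      have := Stmt7Aux.key' p hf hfa γ (g (p.obj v)) (m (p.obj v)) (𝟙 (p.obj v)) (𝟙 (p.obj v))
        (by rw [hgm]; simp)
      simpa using this
  · refine ⟨fun {F G} α β hab => ?_⟩
    ext x
    have hx : ∀ (δ : F ⟶ G), δ.app x =
        F.map (g x) ≫ δ.app (p.obj (u x)) ≫ G.map (m x) := by
      intro δ
      rw [← δ.naturality (m x), ← Category.assoc, ← Functor.map_comp, hgm]
      simp
    rw [hx α, hx β]
    have : α.app (p.obj (u x)) = β.app (p.obj (u x)) := congrArg (fun t => t.app (u x)) hab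
    rw [this]
end

section
/- Let p : e → b be a functor between small categories and suppose p* : [b, Set] → [e, Set] (precomposition with p) is an equivalence of categories. Then p is both fully faithful and a lax epimorphism. -/
open CategoryTheory Limits

universe w v u

namespace Stmt12Aux

open Opposite Functor

variable {e b : Type u} [SmallCategory e] [SmallCategory b] (p : e ⥤ b)

noncomputable section

/-- diagram for the pointwise Lan of `Hom(x, p -)` at `y` -/
abbrev D (x y : b) : CostructuredArrow p y ⥤ Type u :=
  CostructuredArrow.proj p y ⋙ (p ⋙ coyoneda.obj (op x))

/-- the comparison map from the colimit to `Hom(x,y)` -/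
def m (x y : b) :
    colimit (D p x y) ⟶ ((coyoneda.obj (op x) : b ⥤ Type u).obj y) :=
  (p.leftKanExtensionObjIsoColimit (p ⋙ coyoneda.obj (op x)) y).inv ≫
    ((p.lanAdjunction (Type u)).counit.app (coyoneda.obj (op x))).app y

lemma ι_m (x y : b) (f : CostructuredArrow p y) :
    colimit.ι (D p x y) f ≫ m p x y =
      (coyoneda.obj (op x) : b ⥤ Type u).map f.hom := by
  dsimp only [m]
  erw [← Category.assoc, p.ι_leftKanExtensionObjIsoColimit_inv (p ⋙ coyoneda.obj (op x)) y f]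
  have hnat := ((p.lanAdjunction (Type u)).counit.app (coyoneda.obj (op x))).naturality f.hom
  erw [Category.assoc]
  erw [hnat]
  erw [← Category.assoc]
  erw [p.lanUnit_app_app_lanAdjunction_counit_app_app (coyoneda.obj (op x)) f.left]
  simp
  exact Category.id_comp _

lemma ι_m_apply (x y : b) (f : CostructuredArrow p y) (u : x ⟶ p.obj f.left) :
    m p x y (colimit.ι (D p x y) f u) = u ≫ f.hom :=
  ConcreteCategory.congr_hom (ι_m p x y f) u

variable (h : ((whiskeringLeft e b (Type u)).obj p).IsEquivalence)
include h

lemma m_bijective (x y : b) : Function.Bijective (m p x y) := by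
  haveI := h
  haveI : IsIso ((p.lanAdjunction (Type u)).counit) := inferInstance
  haveI : IsIso (((p.lanAdjunction (Type u)).counit.app (coyoneda.obj (op x))).app y) :=
    inferInstance
  haveI : IsIso (m p x y) := by dsimp [m]; exact IsIso.comp_isIso' inferInstance this
  exact (isIso_iff_bijective _).1 inferInstance

lemma fact {x y : b} (g : x ⟶ y) :
    ∃ (w : e) (u : x ⟶ p.obj w) (v : p.obj w ⟶ y), u ≫ v = g := by
  obtain ⟨z, hz⟩ := (m_bijective p h x y).2 g
  obtain ⟨f, u, rfl⟩ := Types.jointly_surjective' z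
  exact ⟨f.left, u, f.hom, by rw [← ι_m_apply p x y f u, hz]⟩

lemma key {c : Type v} [Category.{w} c] (F G : b ⥤ c) (τ : p ⋙ F ⟶ p ⋙ G)
    {x y : b} {w w' : e} (u : x ⟶ p.obj w) (v : p.obj w ⟶ y)
    (u' : x ⟶ p.obj w') (v' : p.obj w' ⟶ y) (huv : u ≫ v = u' ≫ v') :
    F.map u ≫ τ.app w ≫ G.map v = F.map u' ≫ τ.app w' ≫ G.map v' := by
  have heq : colimit.ι (D p x y) (CostructuredArrow.mk v) u =
      colimit.ι (D p x y) (CostructuredArrow.mk v') u' := by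
    apply (m_bijective p h x y).1
    rw [ι_m_apply, ι_m_apply]
    exact huv
  have hrel := Types.colimit_eq heq
  let Φ : (Σ jj : CostructuredArrow p y, (D p x y).obj jj) → (F.obj x ⟶ G.obj y) :=
    fun z => F.map z.2 ≫ τ.app z.1.left ≫ G.map z.1.hom
  have hΦ : ∀ a a', Relation.EqvGen ((D p x y).ColimitTypeRel) a a' → Φ a = Φ a' := by
    intro a a' hr
    induction hr with
    | rel a a' hab =>
        obtain ⟨φ, hφ⟩ := hab
        have hw : p.map φ.left ≫ a'.1.hom = a.1.hom := CostructuredArrow.w φ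
        have hnat := τ.naturality φ.left
        dsimp [Φ]
        rw [hφ]
        show F.map a.2 ≫ _ = _
        dsimp at hnat ⊢
        erw [F.map_comp, Category.assoc, ← Category.assoc (F.map (p.map φ.left)), hnat,
          Category.assoc, ← G.map_comp, hw]
        rfl
    | refl => rfl
    | symm _ _ _ ih => exact ih.symm
    | trans _ _ _ _ _ ih₁ ih₂ => exact ih₁.trans ih₂
  exact hΦ _ _ hrel

lemma p_faithful : p.Faithful := by
  haveI := h
  constructor
  intro w w' f f' hf
  let P := (whiskeringLeft e b (Type u)).obj p
  let F := P.objPreimage (coyoneda.obj (op w))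
  let φ : P.obj F ≅ coyoneda.obj (op w) := P.objObjPreimageIso (coyoneda.obj (op w))
  let ξ : F.obj (p.obj w) := φ.inv.app w (𝟙 w)
  have key : ∀ k : w ⟶ w', φ.inv.app w' k = F.map (p.map k) ξ := by
    intro k
    have := ConcreteCategory.congr_hom (φ.inv.naturality k) (𝟙 w)
    dsimp [P] at this ⊢
    rw [← this]
    simp [ξ]
  have : φ.inv.app w' f = φ.inv.app w' f' := by rw [key, key, hf]
  have hinj : Function.Injective (φ.inv.app w') :=
    (isIso_iff_bijective _).1 inferInstance |>.1
  exact hinj this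

lemma p_full : p.Full := by
  haveI := h
  haveI := (p.lanAdjunction (Type u)).isEquivalence_left_of_isEquivalence_right
  constructor
  intro w w' g
  let G₀ : e ⥤ Type u := coyoneda.obj (op w)
  let t : G₀ ⟶ p ⋙ coyoneda.obj (op (p.obj w)) :=
    { app := fun w₁ => TypeCat.ofHom (fun (k : w ⟶ w₁) => p.map k)
      naturality := by intro w₁ w₂ k₂; ext k; dsimp [G₀]; simp }
  let θ : p.lan.obj G₀ ⟶ coyoneda.obj (op (p.obj w)) :=
    descOfIsLeftKanExtension (p.lan.obj G₀) (p.lanUnit.app G₀) _ t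
  haveI : IsIso ((p.lanAdjunction (Type u)).unit) := inferInstance
  haveI : IsIso (((p.lanAdjunction (Type u)).unit.app G₀).app w') := inferInstance
  have hsurj : Function.Surjective (((p.lanAdjunction (Type u)).unit.app G₀).app w') :=
    ((isIso_iff_bijective _).1 inferInstance).2
  let E : (p.lan.obj G₀).obj (p.obj w') :=
    (p.leftKanExtensionObjIsoColimit G₀ (p.obj w')).inv
      (colimit.ι (CostructuredArrow.proj p (p.obj w') ⋙ G₀)
        (CostructuredArrow.mk (Y := w) g) (𝟙 w))
  obtain ⟨f, hf⟩ := hsurj E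
  refine ⟨f, ?_⟩
  have lhs : θ.app (p.obj w') (((p.lanAdjunction (Type u)).unit.app G₀).app w' f) = p.map f := by
    have hu : (p.lanAdjunction (Type u)).unit = p.lanUnit := p.lanAdjunction_unit (Type u)
    rw [hu]
    have := ConcreteCategory.congr_hom (descOfIsLeftKanExtension_fac_app (p.lan.obj G₀)
      (p.lanUnit.app G₀) _ t w') f
    dsimp at this ⊢
    rw [this]
    rfl
  have rhs : θ.app (p.obj w') E = g := by
    have h1 : colimit.ι (CostructuredArrow.proj p (p.obj w') ⋙ G₀)
        (CostructuredArrow.mk (Y := w) g) ≫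
        (p.leftKanExtensionObjIsoColimit G₀ (p.obj w')).inv ≫ θ.app (p.obj w') =
        (p.lanUnit.app G₀).app w ≫ θ.app (p.obj w) ≫
          (coyoneda.obj (op (p.obj w))).map g := by
      erw [← Category.assoc,
        p.ι_leftKanExtensionObjIsoColimit_inv G₀ (p.obj w') (CostructuredArrow.mk (Y := w) g)]
      have hnat := θ.naturality g
      erw [Category.assoc]
      erw [hnat]
      rfl
    have h2 := ConcreteCategory.congr_hom h1 (𝟙 w)
    dsimp [E] at h2 ⊢
    erw [types_comp_apply, types_comp_apply] at h2
    erw [h2]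
    have := ConcreteCategory.congr_hom (descOfIsLeftKanExtension_fac_app (p.lan.obj G₀)
      (p.lanUnit.app G₀) _ t w) (𝟙 w)
    dsimp at this
    erw [types_comp_apply, types_comp_apply]
    erw [this]
    simp [t]
  rw [← lhs, hf, rhs]

lemma whisker_full (c : Type v) [Category.{w} c] : ((whiskeringLeft e b c).obj p).Full := by
  constructor
  intro F G τ
  have fac : ∀ x : b, ∃ (w : e) (u : x ⟶ p.obj w) (v : p.obj w ⟶ x), u ≫ v = 𝟙 x :=
    fun x => fact p h (𝟙 x)
  choose W U V hUV using fac
  let α : F ⟶ G :=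
    { app := fun x => F.map (U x) ≫ τ.app (W x) ≫ G.map (V x)
      naturality := by
        intro x y f
        dsimp
        rw [← Category.assoc, ← F.map_comp]
        have h1 : (f ≫ U y) ≫ V y = f := by rw [Category.assoc, hUV, Category.comp_id]
        have h2 : U x ≫ (V x ≫ f) = f := by rw [← Category.assoc, hUV, Category.id_comp]
        rw [key p h F G τ (f ≫ U y) (V y) (U x) (V x ≫ f) (by rw [h1, h2])]
        simp }
  refine ⟨α, ?_⟩
  ext w₀
  have := key p h F G τ (U (p.obj w₀)) (V (p.obj w₀)) (𝟙 (p.obj w₀)) (𝟙 (p.obj w₀))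
    (by rw [hUV]; simp)
  dsimp [α]
  rw [this]
  simp

lemma whisker_faithful (c : Type v) [Category.{w} c] :
    ((whiskeringLeft e b c).obj p).Faithful := by
  constructor
  intro F G α β hαβ
  ext x
  obtain ⟨w, u, v, huv⟩ := fact p h (𝟙 x)
  have hα : α.app x = F.map u ≫ α.app (p.obj w) ≫ G.map v := by
    have := α.naturality v
    rw [← this, ← Category.assoc, ← F.map_comp, huv, F.map_id, Category.id_comp]
  have hβ : β.app x = F.map u ≫ β.app (p.obj w) ≫ G.map v := by
    have := β.naturality v
    rw [← this, ← Category.assoc, ← F.map_comp, huv, F.map_id, Category.id_comp]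
  have : α.app (p.obj w) = β.app (p.obj w) := congr_arg (fun τ => NatTrans.app τ w) hαβ
  rw [hα, hβ, this]

end
end Stmt12Aux

theorem stmt12 {e b : Type u} [SmallCategory e] [SmallCategory b] (p : e ⥤ b)
    (h : ((Functor.whiskeringLeft e b (Type u)).obj p).IsEquivalence) :
    (p.Full ∧ p.Faithful) ∧
      ∀ (c : Type v) (_ : Category.{w} c),
        ((Functor.whiskeringLeft e b c).obj p).Full ∧ ((Functor.whiskeringLeft e b c).obj p).Faithful := by
  exact ⟨⟨Stmt12Aux.p_full p h, Stmt12Aux.p_faithful p h⟩,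
    fun c inst => ⟨Stmt12Aux.whisker_full p h c, Stmt12Aux.whisker_faithful p h c⟩⟩
end
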